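/- Suppose for a family of orthonormal vectors |ĩj⟩ in H_A ⊗ H_{Ā} there is a unitary U_A on H_A, a decomposition H_A ⊇ H_{A₁} ⊗ H_{A₂} with orthonormal basis |i⟩_{A₁} of H_{A₁}, and orthonormal vectors |χ_j⟩ ∈ H_{A₂} ⊗ H_{Ā} with |ĩj⟩ = (U_A ⊗ I)(|i⟩_{A₁} ⊗ |χ_j⟩). Then for every operator Õ_a defined on span{|ĩj⟩} by Õ_a|ĩj⟩ = Σ_k O^{ki}|k̃j⟩, the operator O_A := U_A (O_{A₁} ⊗ I_{A₂}) U_A†, where O_{A₁}|i⟩ = Σ_k O^{ki}|k⟩, satisfies (O_A ⊗ I_{Ā})|ψ̃⟩ = Õ_a|ψ̃⟩ for all |ψ̃⟩ in the span of the |ĩj⟩. -/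
import Mathlib


open scoped BigOperators Kronecker
open Matrix

variable {A₁ A₂ A Ab J : Type*}
  [Fintype A₁] [DecidableEq A₁] [Fintype A₂] [DecidableEq A₂]
  [Fintype A] [DecidableEq A] [Fintype Ab] [DecidableEq Ab]
  [Fintype J] [DecidableEq J]

/-- The vector `|i⟩_{A₁} ⊗ |χ_j⟩_{A₂ Ā}` as a function on `(A₁ × A₂) × Ā`. -/
noncomputable def prodVec (χ : J → (A₂ × Ab → ℂ)) (i : A₁) (j : J) :
    (A₁ × A₂) × Ab → ℂ :=
  fun q => (if q.1.1 = i then 1 else 0) * χ j (q.1.2, q.2)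

/-- Explicit construction of the reconstructing operator
`O_A = U_A (O_{A₁} ⊗ I_{A₂}) U_A†` for the logical operator
`Õ_a |ĩj⟩ = Σ_k O^{ki}|k̃j⟩`, where `|ĩj⟩ = (U_A ⊗ I)(|i⟩_{A₁}|χ_j⟩)` and
`H_{A₁} ⊗ H_{A₂}` embeds isometrically into `H_A` via `W`. -/
theorem reconstruction_operator_exists
    (W : Matrix A (A₁ × A₂) ℂ) (hW : Wᴴ * W = 1)
    (UA : Matrix A A ℂ) (hUA : UA ∈ Matrix.unitaryGroup A ℂ)
    (χ : J → (A₂ × Ab → ℂ)) (hχ : Orthonormal ℂ fun j => (EuclideanSpace.equiv (A₂ × Ab) ℂ).symm (χ j))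
    (code : A₁ → J → (A × Ab → ℂ))
    (hcode : ∀ i j, code i j = ((UA * W) ⊗ₖ (1 : Matrix Ab Ab ℂ)) *ᵥ prodVec χ i j)
    (O : Matrix A₁ A₁ ℂ) :
    ∃ OA : Matrix A A ℂ,
      OA = UA * (W * (O ⊗ₖ (1 : Matrix A₂ A₂ ℂ)) * Wᴴ) * UAᴴ ∧
      ∀ c : A₁ → J → ℂ,
        (OA ⊗ₖ (1 : Matrix Ab Ab ℂ)) *ᵥ (∑ i, ∑ j, c i j • code i j)
          = ∑ i, ∑ j, c i j • (∑ k, O k i • code k j) := by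
  classical
  set OA := UA * (W * (O ⊗ₖ (1 : Matrix A₂ A₂ ℂ)) * Wᴴ) * UAᴴ with hOA
  refine ⟨OA, rfl, ?_⟩
  have hU : UAᴴ * UA = 1 := by
    simpa [Matrix.star_eq_conjTranspose] using hUA.1
  have hmul : OA * (UA * W) = (UA * W) * (O ⊗ₖ (1 : Matrix A₂ A₂ ℂ)) := by
    rw [hOA]
    calc UA * (W * (O ⊗ₖ (1 : Matrix A₂ A₂ ℂ)) * Wᴴ) * UAᴴ * (UA * W)
        = UA * (W * ((O ⊗ₖ (1 : Matrix A₂ A₂ ℂ)) * ((Wᴴ * ((UAᴴ * UA) * W))))) := by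
          simp only [Matrix.mul_assoc]
      _ = (UA * W) * (O ⊗ₖ (1 : Matrix A₂ A₂ ℂ)) := by
          rw [hU, Matrix.one_mul, hW, Matrix.mul_one, Matrix.mul_assoc]
  have key : ∀ i j, (OA ⊗ₖ (1 : Matrix Ab Ab ℂ)) *ᵥ code i j
      = ∑ k, O k i • code k j := by
    intro i j
    have h1 : (OA ⊗ₖ (1 : Matrix Ab Ab ℂ)) *ᵥ code i j
        = (((UA * W) * (O ⊗ₖ (1 : Matrix A₂ A₂ ℂ))) ⊗ₖ (1 : Matrix Ab Ab ℂ)) *ᵥ prodVec χ i j := by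
      rw [hcode, Matrix.mulVec_mulVec, ← Matrix.mul_kronecker_mul, Matrix.one_mul, hmul]
    have h2 : ((O ⊗ₖ (1 : Matrix A₂ A₂ ℂ)) ⊗ₖ (1 : Matrix Ab Ab ℂ)) *ᵥ prodVec χ i j
        = ∑ k, O k i • prodVec χ k j := by
      funext q
      obtain ⟨⟨a1, a2⟩, b⟩ := q
      simp [Matrix.mulVec, dotProduct, prodVec, Matrix.one_apply,
        Fintype.sum_prod_type, mul_ite, ite_mul, mul_comm, Finset.sum_ite_eq,
        Finset.sum_ite_eq', Finset.mul_sum, Finset.sum_apply]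
    have h3 : (((UA * W) * (O ⊗ₖ (1 : Matrix A₂ A₂ ℂ))) ⊗ₖ (1 : Matrix Ab Ab ℂ))
        = ((UA * W) ⊗ₖ (1 : Matrix Ab Ab ℂ)) * ((O ⊗ₖ (1 : Matrix A₂ A₂ ℂ)) ⊗ₖ (1 : Matrix Ab Ab ℂ)) := by
      rw [← Matrix.mul_kronecker_mul, Matrix.one_mul]
    rw [h1, h3, ← Matrix.mulVec_mulVec, h2]
    rw [show ((UA * W) ⊗ₖ (1 : Matrix Ab Ab ℂ)) *ᵥ (∑ k, O k i • prodVec χ k j)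
        = ∑ k, O k i • (((UA * W) ⊗ₖ (1 : Matrix Ab Ab ℂ)) *ᵥ prodVec χ k j) from by
      simp only [← Matrix.mulVecLin_apply, map_sum, _root_.map_smul]]
    refine Finset.sum_congr rfl fun k _ => ?_
    rw [hcode]
  intro c
  rw [show (OA ⊗ₖ (1 : Matrix Ab Ab ℂ)) *ᵥ (∑ i, ∑ j, c i j • code i j)
      = ∑ i, ∑ j, c i j • ((OA ⊗ₖ (1 : Matrix Ab Ab ℂ)) *ᵥ code i j) from by
    simp only [← Matrix.mulVecLin_apply, map_sum, _root_.map_smul]]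
  refine Finset.sum_congr rfl fun i _ => Finset.sum_congr rfl fun j _ => ?_
  rw [key]
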